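/- arXiv:2301.01800 — 5 statements merged into one kernel-verified Lean document; each statement's English description precedes it below -/
import Mathlib

section
/- Let ℓ be a prime number, G a pro-(prime-to-ℓ) profinite group, and d, n ≥ 1 integers. Then every group homomorphism ρ : G → GL_d(ℤ/ℓ^nℤ) (no continuity assumption) such that ρ(g) is unipotent for every g ∈ G is trivial, i.e. ρ(g) = 1 for all g ∈ G. -/
/-- In a finite monoid with zero, a nilpotent element to the power of the cardinality is zero. -/
lemma aux_pow_card_eq_zero {R : Type*} [MonoidWithZero R] [Fintype R]
    {x : R} (hx : IsNilpotent x) : x ^ (Fintype.card R) = 0 := by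
  obtain ⟨k, hk⟩ := hx
  have : ∃ i : ℕ, i ≤ Fintype.card R ∧ x ^ i = 0 := by
    obtain ⟨i, j, hne, hij⟩ := Fintype.exists_ne_map_eq_of_card_lt
      (fun i : Fin (Fintype.card R + 1) => x ^ (i : ℕ)) (by simp)
    have hne' : (i : ℕ) ≠ (j : ℕ) := fun h => hne (Fin.ext h)
    rcases Nat.lt_or_ge (i : ℕ) (j : ℕ) with h | h
    · refine ⟨i, by omega, ?_⟩
      have key : ∀ m : ℕ, x ^ ((i : ℕ) + m * ((j : ℕ) - i)) = x ^ (i : ℕ) := by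
        intro m
        induction m with
        | zero => simp
        | succ m ih =>
          have : (i : ℕ) + (m + 1) * ((j : ℕ) - i) = ((i : ℕ) + m * ((j:ℕ) - i)) + ((j:ℕ) - i) := by
            ring
          rw [this, pow_add, ih, ← pow_add]
          have : (i : ℕ) + ((j : ℕ) - i) = (j : ℕ) := by omega
          rw [this, ← hij]
      have h2 : (i : ℕ) + k * ((j : ℕ) - i) = k + ((i : ℕ) + k * ((j:ℕ)-i) - k) := by
        have : k ≤ (i : ℕ) + k * ((j : ℕ) - i) := by
          have : 1 ≤ (j : ℕ) - i := by omega
          calc k ≤ k * ((j:ℕ) - i) := Nat.le_mul_of_pos_right k (by omega)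
          _ ≤ _ := by omega
        omega
      rw [← key k, h2, pow_add, hk, zero_mul]
    · refine ⟨j, by omega, ?_⟩
      have hlt : (j : ℕ) < (i : ℕ) := by omega
      have key : ∀ m : ℕ, x ^ ((j : ℕ) + m * ((i : ℕ) - j)) = x ^ (j : ℕ) := by
        intro m
        induction m with
        | zero => simp
        | succ m ih =>
          have : (j : ℕ) + (m + 1) * ((i : ℕ) - j) = ((j : ℕ) + m * ((i:ℕ) - j)) + ((i:ℕ) - j) := by
            ring
          rw [this, pow_add, ih, ← pow_add]
          have : (j : ℕ) + ((i : ℕ) - j) = (i : ℕ) := by omega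
          rw [this, hij]
      have h2 : (j : ℕ) + k * ((i : ℕ) - j) = k + ((j : ℕ) + k * ((i:ℕ)-j) - k) := by
        have : k ≤ (j : ℕ) + k * ((i : ℕ) - j) := by
          have : 1 ≤ (i : ℕ) - j := by omega
          calc k ≤ k * ((i:ℕ) - j) := Nat.le_mul_of_pos_right k (by omega)
          _ ≤ _ := by omega
        omega
      rw [← key k, h2, pow_add, hk, zero_mul]
  obtain ⟨i, hi, h0⟩ := this
  calc x ^ Fintype.card R = x ^ i * x ^ (Fintype.card R - i) := by rw [← pow_add]; congr 1; omega
  _ = 0 := by rw [h0, zero_mul]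


lemma aux_dvd_choose {ℓ n D : ℕ} (hℓ : ℓ.Prime) {b : ℕ}
    (hb0 : b ≠ 0) (hbD : b < D) : ℓ ^ n ∣ (ℓ ^ (n + D)).choose b := by
  have hble : b ≤ ℓ ^ (n + D) := by
    have := Nat.lt_pow_self (n := n + D) hℓ.one_lt
    omega
  have hmult : multiplicity ℓ b = (Nat.factorization b) ℓ :=
    Nat.multiplicity_eq_factorization hℓ hb0
  have hfac : (Nat.factorization b) ℓ < b := Nat.factorization_lt ℓ hb0
  have heq := hℓ.emultiplicity_choose_prime_pow (n := n + D) hble hb0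
  apply pow_dvd_of_le_emultiplicity (k := n)
  rw [heq, Nat.cast_le]
  omega

open Finset in
lemma aux_unipotent_pow {ℓ n : ℕ} (hℓ : ℓ.Prime) {d : ℕ} [NeZero (ℓ ^ n)]
    (M : Matrix (Fin d) (Fin d) (ZMod (ℓ ^ n))) (hM : IsNilpotent (M - 1)) :
    M ^ ℓ ^ (n + (Fintype.card (Matrix (Fin d) (Fin d) (ZMod (ℓ ^ n))) + 1)) = 1 := by
  set D := Fintype.card (Matrix (Fin d) (Fin d) (ZMod (ℓ ^ n))) + 1 with hD
  set q := ℓ ^ (n + D) with hq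
  set X := M - 1 with hX
  have hXD : X ^ D = 0 := by
    rw [hD, pow_succ, aux_pow_card_eq_zero hM, zero_mul]
  have hM1 : M = X + 1 := by rw [hX]; abel
  rw [hM1, (Commute.one_right X).add_pow]
  rw [Finset.sum_eq_single_of_mem 0 (Finset.mem_range.mpr (by omega))]
  · simp
  · intro b _ hb0
    rcases Nat.lt_or_ge b D with hbD | hbD
    · have h0 : ((q.choose b : ℕ) : ZMod (ℓ ^ n)) = 0 :=
        (ZMod.natCast_eq_zero_iff _ _).mpr (aux_dvd_choose hℓ hb0 hbD)
      have h1 : ((q.choose b : ℕ) : Matrix (Fin d) (Fin d) (ZMod (ℓ ^ n))) = 0 := by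
        rw [← map_natCast (algebraMap (ZMod (ℓ ^ n)) (Matrix (Fin d) (Fin d) (ZMod (ℓ ^ n)))),
          h0, map_zero]
      rw [h1, mul_zero]
    · have : X ^ b = 0 := pow_eq_zero_of_le hbD hXD
      rw [this, zero_mul, zero_mul]

/-- Let `ℓ` be a prime, `G` a pro-(prime-to-`ℓ`) profinite group,
and `d, n ≥ 1`. Then every (not necessarily continuous) group homomorphism
`ρ : G → GL_d(ℤ/ℓ^nℤ)` such that every `ρ g` is unipotent is trivial. -/
theorem stmt_3
    (ℓ : ℕ) (hℓ : ℓ.Prime)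
    (G : Type*) [Group G] [TopologicalSpace G] [IsTopologicalGroup G]
    [CompactSpace G] [T2Space G] [TotallyDisconnectedSpace G]
    (hG : ∀ U : Subgroup G, U.Normal → IsOpen (U : Set G) → Nat.Coprime U.index ℓ)
    (d n : ℕ) (hd : 1 ≤ d) (hn : 1 ≤ n)
    (ρ : G →* Matrix.GeneralLinearGroup (Fin d) (ZMod (ℓ ^ n)))
    (hρ : ∀ g : G,
      IsNilpotent ((ρ g : Matrix (Fin d) (Fin d) (ZMod (ℓ ^ n))) - 1)) :
    ∀ g : G, ρ g = 1 := by
  haveI : NeZero (ℓ ^ n) := ⟨pow_ne_zero n hℓ.pos.ne'⟩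
  intro g
  set q := ℓ ^ (n + (Fintype.card (Matrix (Fin d) (Fin d) (ZMod (ℓ ^ n))) + 1)) with hq
  -- Step 1: g is a q-th power
  have key : ∃ h : G, h ^ q = g := by
    haveI : Nonempty (OpenNormalSubgroup G) := ⟨⟨⊤, ⟨fun x hx g => by simp⟩⟩⟩
    set Z : OpenNormalSubgroup G → Set G := fun U => (fun h => (h ^ q)⁻¹ * g) ⁻¹' (U : Set G)
      with hZ
    have hcont : Continuous fun h : G => (h ^ q)⁻¹ * g :=
      ((continuous_pow q).inv).mul continuous_const
    have hZcl : ∀ U, IsClosed (Z U) := fun U =>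
      (OpenSubgroup.isClosed U.toOpenSubgroup).preimage hcont
    have hZne : ∀ U, (Z U).Nonempty := by
      intro U
      have hco : Nat.Coprime (U : Subgroup G).index ℓ :=
        hG (U : Subgroup G) inferInstance U.toOpenSubgroup.isOpen
      have hco' : (Nat.card (G ⧸ (U : Subgroup G))).Coprime q := by
        have : Nat.card (G ⧸ (U : Subgroup G)) = (U : Subgroup G).index := rfl
        rw [this, hq]
        exact Nat.Coprime.pow_right _ hco
      obtain ⟨x, hx⟩ := (Nat.Coprime.pow_left_bijective hco').surjective
        ((g : G ⧸ (U : Subgroup G)))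
      obtain ⟨h, rfl⟩ := QuotientGroup.mk_surjective x
      refine ⟨h, ?_⟩
      have : ((h ^ q : G) : G ⧸ (U : Subgroup G)) = (g : G ⧸ (U : Subgroup G)) := by
        rw [← hx]; rfl
      exact QuotientGroup.eq.mp this
    have hZdir : Directed (· ⊇ ·) Z := by
      intro U V
      exact ⟨U ⊓ V, fun x hx => Set.mem_preimage.mpr (Set.mem_preimage.mp hx).1,
        fun x hx => Set.mem_preimage.mpr (Set.mem_preimage.mp hx).2⟩
    obtain ⟨h, hh⟩ := IsCompact.nonempty_iInter_of_directed_nonempty_isCompact_isClosed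
      Z hZdir hZne (fun U => (hZcl U).isCompact) hZcl
    refine ⟨h, ?_⟩
    have hmem : ∀ U : OpenNormalSubgroup G, (h ^ q)⁻¹ * g ∈ (U : Subgroup G) := by
      intro U
      exact Set.mem_iInter.mp hh U
    by_contra hne
    have hx1 : (h ^ q)⁻¹ * g ≠ 1 := fun h1 => hne (inv_mul_eq_one.mp h1)
    haveI : TotallySeparatedSpace G := loc_compact_t2_tot_disc_iff_tot_sep.mp inferInstance
    obtain ⟨W, hWclopen, h1W, hxW⟩ :=
      exists_isClopen_of_totally_separated (Ne.symm hx1)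
    obtain ⟨H, hH⟩ :=
      IsTopologicalGroup.exist_openNormalSubgroup_sub_clopen_nhds_of_one hWclopen h1W
    exact hxW (hH (hmem H))
  -- Step 2
  obtain ⟨h, rfl⟩ := key
  rw [map_pow]
  apply Units.ext
  rw [Units.val_pow_eq_pow_val, Units.val_one]
  exact aux_unipotent_pow hℓ _ (hρ h)
end

section
/- Let ℓ be a prime number and let G be a profinite group equipped with a continuous surjective group homomorphism t : G → ℤ_ℓ (onto the additive group of ℓ-adic integers) whose kernel P is a pro-(prime-to-ℓ) profinite group. Let d, n ≥ 1 and let ρ : G → GL_d(ℤ/ℓ^nℤ) be a group homomorphism (no continuity assumption) such that ρ(g) is unipotent for every g ∈ G. Then ρ(P) = {1} and ρ is continuous (equivalently, the kernel of ρ is an open subgroup of G), where GL_d(ℤ/ℓ^nℤ) carries the discrete topology. -/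
open Finset in
/-- In a ring where `p^n = 0`, `1 + N` with `N` nilpotent has `p`-power order. -/
lemma aux_unip {R : Type*} [Ring R] (p n : ℕ) (hp : p.Prime) (hpn : (p : R) ^ n = 0)
    (N : R) (hN : IsNilpotent N) : ∃ k, (1 + N) ^ p ^ k = 1 := by
  obtain ⟨j, hj⟩ := hN
  refine ⟨n + j, ?_⟩
  have hcomm : Commute N (1 : R) := Commute.one_right N
  rw [add_comm, hcomm.add_pow]
  rw [Finset.sum_eq_single_of_mem 0 (Finset.mem_range.mpr (Nat.succ_pos _))]
  · simp
  intro i hi hi0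
  rcases le_or_gt j i with hji | hij
  · have : N ^ i = 0 := by
      calc N ^ i = N ^ j * N ^ (i - j) := by rw [← pow_add, Nat.add_sub_cancel' hji]
      _ = 0 := by rw [hj, zero_mul]
    rw [this, zero_mul, zero_mul]
  · -- 1 ≤ i < j : the binomial coefficient is divisible by p^n
    have hdvd : p ^ n ∣ (p ^ (n + j)).choose i := by
      have hipos : 0 < i := Nat.pos_of_ne_zero hi0
      have hij' : i ≤ p ^ (n + j) :=
        le_of_lt (lt_of_lt_of_le hij ((le_of_lt (Nat.lt_pow_self (n := j) hp.one_lt)).trans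
          (Nat.pow_le_pow_right hp.pos (Nat.le_add_left j n))))
      have hmul := hp.emultiplicity_choose_prime_pow hij' hi0
      apply pow_dvd_of_le_emultiplicity
      rw [hmul]
      have hv : multiplicity p i < j := by
        have h1 : p ^ multiplicity p i ∣ i := pow_multiplicity_dvd p i
        have h2 : p ^ multiplicity p i ≤ i := Nat.le_of_dvd hipos h1
        have h3 : multiplicity p i < p ^ multiplicity p i :=
          Nat.lt_pow_self hp.one_lt
        omega
      exact_mod_cast Nat.le_sub_of_add_le (by omega)
    obtain ⟨c, hc⟩ := hdvd
    have : (((p ^ (n + j)).choose i : ℕ) : R) = 0 := by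
      rw [hc]
      push_cast
      rw [hpn, zero_mul]
    rw [this, mul_zero]

/-- Uniform `p`-power order bound in a finite group. -/
lemma aux_pow_card {H : Type*} [Group H] [Finite H] (p : ℕ) (hp : p.Prime)
    (M : H) (h : ∃ k, M ^ p ^ k = 1) : M ^ p ^ Nat.card H = 1 := by
  obtain ⟨k, hk⟩ := h
  obtain ⟨k', hk', hM⟩ := (Nat.dvd_prime_pow hp).mp (orderOf_dvd_of_pow_eq_one hk)
  have hcard : orderOf M ∣ Nat.card H := orderOf_dvd_natCard M
  have hle : orderOf M ≤ Nat.card H := Nat.le_of_dvd Nat.card_pos hcard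
  have : k' ≤ Nat.card H := by
    have := Nat.lt_pow_self (n := k') hp.one_lt
    omega
  exact orderOf_dvd_iff_pow_eq_one.mp (hM ▸ pow_dvd_pow p this)

/-- In a profinite group the intersection of all open normal subgroups is trivial. -/
lemma aux_inter {H : Type*} [Group H] [TopologicalSpace H] [IsTopologicalGroup H]
    [CompactSpace H] [T2Space H] [TotallyDisconnectedSpace H]
    (x : H) (hx : ∀ U : OpenNormalSubgroup H, x ∈ U) : x = 1 := by
  by_contra hne
  obtain ⟨W, hW, h1W, hxW⟩ := exists_isClopen_of_totally_separated (Ne.symm hne)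
  obtain ⟨U, hU⟩ := IsTopologicalGroup.exist_openNormalSubgroup_sub_clopen_nhds_of_one hW h1W
  exact hxW (hU (hx U))

/-- In a profinite group all of whose open normal subgroups have index coprime to `m`,
the `m`-th power map is surjective. -/
lemma aux_surj {H : Type*} [Group H] [TopologicalSpace H] [IsTopologicalGroup H]
    [CompactSpace H] [T2Space H] [TotallyDisconnectedSpace H] (m : ℕ)
    (hcop : ∀ U : Subgroup H, U.Normal → IsOpen (U : Set H) → Nat.Coprime U.index m)
    (g : H) : ∃ h : H, h ^ m = g := by
  haveI : Nonempty (OpenNormalSubgroup H) :=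
    ⟨⟨⊤, (inferInstance : (⊤ : Subgroup H).Normal)⟩⟩
  have key : (⋂ U : OpenNormalSubgroup H, {h : H | (h ^ m)⁻¹ * g ∈ U}).Nonempty := by
    have hcont : Continuous fun h : H => (h ^ m)⁻¹ * g :=
      ((continuous_pow m).inv).mul continuous_const
    have hclosed : ∀ U : OpenNormalSubgroup H, IsClosed {h : H | (h ^ m)⁻¹ * g ∈ U} :=
      fun U => U.toOpenSubgroup.isClosed.preimage hcont
    apply IsCompact.nonempty_iInter_of_directed_nonempty_isCompact_isClosed
    · intro U V
      exact ⟨U ⊓ V, fun x hx => hx.1, fun x hx => hx.2⟩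
    · intro U
      haveI : Finite (H ⧸ U.toSubgroup) :=
        U.toSubgroup.quotient_finite_of_isOpen U.toOpenSubgroup.isOpen
      have hc : (Nat.card (H ⧸ U.toSubgroup)).Coprime m :=
        hcop U.toSubgroup inferInstance U.toOpenSubgroup.isOpen
      obtain ⟨x, hx⟩ := (powCoprime hc).surjective ((g : H ⧸ U.toSubgroup))
      obtain ⟨h, rfl⟩ := QuotientGroup.mk_surjective x
      refine ⟨h, ?_⟩
      have : ((h ^ m : H) : H ⧸ U.toSubgroup) = (g : H ⧸ U.toSubgroup) := by
        simpa [powCoprime] using hx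
      exact QuotientGroup.eq.mp this
    · exact fun U => (hclosed U).isCompact
    · exact hclosed
  obtain ⟨h, hh⟩ := key
  simp only [Set.mem_iInter, Set.mem_setOf_eq] at hh
  refine ⟨h, ?_⟩
  have := aux_inter ((h ^ m)⁻¹ * g) hh
  rwa [inv_mul_eq_one] at this

/-- Let `ℓ` be a prime and `G` a profinite group with a continuous
surjective homomorphism `t : G → ℤ_ℓ` (to the additive group of `ℓ`-adic integers)
whose kernel is a pro-(prime-to-`ℓ`) profinite group. If `ρ : G → GL_d(ℤ/ℓ^nℤ)` is a
(not necessarily continuous) homomorphism with every `ρ g` unipotent, then `ρ` kills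
the kernel of `t` and `ρ` is continuous, i.e. its kernel is an open subgroup of `G`. -/
theorem stmt_4
    (ℓ : ℕ) [Fact ℓ.Prime]
    (G : Type*) [Group G] [TopologicalSpace G] [IsTopologicalGroup G]
    [CompactSpace G] [T2Space G] [TotallyDisconnectedSpace G]
    (t : G →* Multiplicative ℤ_[ℓ])
    (ht : Continuous t) (hts : Function.Surjective t)
    (hP : ∀ U : Subgroup t.ker, U.Normal → IsOpen (U : Set t.ker) → Nat.Coprime U.index ℓ)
    (d n : ℕ) (hd : 1 ≤ d) (hn : 1 ≤ n)
    (ρ : G →* Matrix.GeneralLinearGroup (Fin d) (ZMod (ℓ ^ n)))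
    (hρ : ∀ g : G,
      IsNilpotent ((ρ g : Matrix (Fin d) (Fin d) (ZMod (ℓ ^ n))) - 1)) :
    (∀ g ∈ t.ker, ρ g = 1) ∧ IsOpen (ρ.ker : Set G) := by
  have hℓ : ℓ.Prime := Fact.out
  haveI : NeZero (ℓ ^ n) := ⟨pow_ne_zero n hℓ.ne_zero⟩
  haveI : Finite (Matrix.GeneralLinearGroup (Fin d) (ZMod (ℓ ^ n))) := inferInstance
  set K := Nat.card (Matrix.GeneralLinearGroup (Fin d) (ZMod (ℓ ^ n))) with hK
  set m := ℓ ^ K with hm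
  -- every unipotent element satisfies M ^ m = 1
  have key1 : ∀ M : Matrix.GeneralLinearGroup (Fin d) (ZMod (ℓ ^ n)),
      IsNilpotent ((M : Matrix (Fin d) (Fin d) (ZMod (ℓ ^ n))) - 1) → M ^ m = 1 := by
    intro M hM
    apply aux_pow_card ℓ hℓ
    have hchar : ((ℓ : Matrix (Fin d) (Fin d) (ZMod (ℓ ^ n)))) ^ n = 0 := by
      rw [← Nat.cast_pow,
        ← map_natCast (algebraMap (ZMod (ℓ ^ n)) (Matrix (Fin d) (Fin d) (ZMod (ℓ ^ n)))) (ℓ ^ n),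
        ZMod.natCast_self, map_zero]
    obtain ⟨k, hk⟩ := aux_unip ℓ n hℓ hchar _ hM
    refine ⟨k, ?_⟩
    ext1
    rw [Units.val_pow_eq_pow_val, Units.val_one, ← hk, add_sub_cancel]
  -- the kernel of t is a profinite group
  have hker_closed : IsClosed (t.ker : Set G) := by
    have : (t.ker : Set G) = t ⁻¹' {1} := by ext x; simp [MonoidHom.mem_ker]
    rw [this]; exact isClosed_singleton.preimage ht
  haveI : CompactSpace t.ker := isCompact_iff_compactSpace.mp hker_closed.isCompact
  -- part 1
  have part1 : ∀ g ∈ t.ker, ρ g = 1 := by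
    intro g hg
    obtain ⟨h, hh⟩ := aux_surj m
      (fun U hN hO => (hP U hN hO).pow_right K) (⟨g, hg⟩ : t.ker)
    have hpow : (h : G) ^ m = g := congrArg Subtype.val hh
    rw [← hpow, map_pow, key1 (ρ h) (hρ h)]
  refine ⟨part1, ?_⟩
  -- part 2
  set V : Set ℤ_[ℓ] := Metric.closedBall 0 ((ℓ : ℝ) ^ (-(K : ℤ))) with hV
  have hVopen : IsOpen V :=
    IsUltrametricDist.isOpen_closedBall 0
      (ne_of_gt (zpow_pos (by exact_mod_cast hℓ.pos) _))
  have hVmem : ∀ x : ℤ_[ℓ], x ∈ V → ∃ z : ℤ_[ℓ], x = (ℓ : ℤ_[ℓ]) ^ K * z := by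
    intro x hx
    have : ‖x‖ ≤ (ℓ : ℝ) ^ (-(K : ℤ)) := by
      rw [hV, Metric.mem_closedBall, dist_zero_right] at hx
      exact hx
    have := (PadicInt.norm_le_pow_iff_mem_span_pow x K).mp this
    rw [Ideal.mem_span_singleton] at this
    obtain ⟨z, hz⟩ := this
    exact ⟨z, hz⟩
  set W : Set (Multiplicative ℤ_[ℓ]) := Multiplicative.toAdd ⁻¹' V with hW
  have hWopen : IsOpen W := hVopen.preimage continuous_toAdd
  have hsub : t ⁻¹' W ⊆ (ρ.ker : Set G) := by
    intro g hg
    obtain ⟨z, hz⟩ := hVmem _ hg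
    obtain ⟨h, hh⟩ := hts (Multiplicative.ofAdd z)
    have hker : g * (h ^ m)⁻¹ ∈ t.ker := by
      rw [MonoidHom.mem_ker, map_mul, map_inv, map_pow, hh]
      have : Multiplicative.toAdd (t g * ((Multiplicative.ofAdd z) ^ m)⁻¹) = 0 := by
        rw [toAdd_mul, toAdd_inv, toAdd_pow, toAdd_ofAdd, hz]
        rw [hm, nsmul_eq_mul]
        push_cast
        ring
      have h1 := congrArg Multiplicative.ofAdd this
      rwa [ofAdd_toAdd] at h1
    have : ρ g = ρ (g * (h ^ m)⁻¹) * (ρ h) ^ m := by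
      rw [← map_pow, ← map_mul, inv_mul_cancel_right]
    rw [SetLike.mem_coe, MonoidHom.mem_ker, this, part1 _ hker, key1 (ρ h) (hρ h), one_mul]
  apply Subgroup.isOpen_of_mem_nhds (g := 1)
  apply Filter.mem_of_superset _ hsub
  apply (hWopen.preimage ht).mem_nhds
  show Multiplicative.toAdd (t 1) ∈ V
  rw [map_one]
  simp [hV, Real.rpow_natCast]
end

section
/- Let ℓ be a prime number and let G be a profinite group equipped with a continuous surjective group homomorphism t : G → ℤ_ℓ (onto the additive group of ℓ-adic integers) whose kernel is a pro-(prime-to-ℓ) profinite group. Let V be a finite-dimensional ℚ_ℓ-vector space and ρ : G → GL(V) a continuous group homomorphism such that ρ(g) is unipotent for every g ∈ G. Then there exists a unique nilpotent endomorphism N of V such that ρ(g) = exp(t(g) · N) for all g ∈ G. -/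
open Finset Filter Topology

section Aux

variable (ℓ : ℕ) [hℓ : Fact ℓ.Prime]
variable {A : Type*} [NormedRing A] [NormedAlgebra ℚ_[ℓ] A]

theorem aux_vanish {A : Type*} [AddCommGroup A] [Module ℚ_[ℓ] A] (r : ℕ) (b : ℕ → A)
    (h : ∀ x : ℤ_[ℓ], ∑ j ∈ Finset.range r, ((x : ℚ_[ℓ]) ^ j) • b j = 0) :
    ∀ j, j < r → b j = 0 := by
  intro j hj
  rw [← Module.forall_dual_apply_eq_zero_iff ℚ_[ℓ]]
  intro f
  set p : Polynomial ℚ_[ℓ] := ∑ i ∈ Finset.range r, Polynomial.C (f (b i)) * Polynomial.X ^ i with hp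
  have hev : ∀ x : ℚ_[ℓ], p.eval x = f (∑ j ∈ Finset.range r, x ^ j • b j) := by
    intro x
    rw [map_sum f, hp, Polynomial.eval_finset_sum]
    refine Finset.sum_congr rfl fun i _ => ?_
    rw [map_smul, Polynomial.eval_mul, Polynomial.eval_C, Polynomial.eval_pow, Polynomial.eval_X,
      smul_eq_mul, mul_comm]
  have hroot : ∀ x : ℤ_[ℓ], p.IsRoot ((x : ℚ_[ℓ])) := by
    intro x
    have hx := h x
    rw [Polynomial.IsRoot, hev, hx, map_zero]
  have hp0 : p = 0 := by
    apply Polynomial.eq_zero_of_infinite_isRoot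
    apply Set.Infinite.mono (s := Set.range ((↑) : ℤ_[ℓ] → ℚ_[ℓ]))
    · rintro - ⟨x, rfl⟩; exact hroot x
    · haveI : Infinite ℤ_[ℓ] := Infinite.of_injective ((↑) : ℕ → ℤ_[ℓ]) Nat.cast_injective
      exact Set.infinite_range_of_injective (α := ℤ_[ℓ]) Subtype.coe_injective
  have hco := congrArg (fun q => Polynomial.coeff q j) hp0
  simpa [hp, Polynomial.finset_sum_coeff, Polynomial.coeff_C_mul, Polynomial.coeff_X_pow,
    Finset.sum_ite_eq' (Finset.range r), hj] using hco

theorem aux_choose_tendsto (k : ℕ) :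
    Tendsto (fun m : ℕ => (((ℓ ^ m).choose (k + 1) : ℚ_[ℓ]))) atTop (𝓝 0) := by
  have hk1 : ((k + 1 : ℕ) : ℚ_[ℓ]) ≠ 0 := Nat.cast_ne_zero.2 (Nat.succ_ne_zero k)
  have hbound : ∀ m : ℕ, ‖(((ℓ ^ m).choose (k + 1) : ℚ_[ℓ]))‖ ≤
      ‖((k + 1 : ℕ) : ℚ_[ℓ])‖⁻¹ * ((ℓ : ℝ)⁻¹) ^ m := by
    intro m
    have hpos : 1 ≤ ℓ ^ m := Nat.one_le_pow _ _ hℓ.out.pos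
    have hid : (ℓ ^ m) * (ℓ ^ m - 1).choose k = (ℓ ^ m).choose (k + 1) * (k + 1) := by
      have h := Nat.add_one_mul_choose_eq (ℓ ^ m - 1) k
      rw [Nat.sub_add_cancel hpos] at h
      exact h
    have hidQ : ((ℓ : ℚ_[ℓ]) ^ m) * ((ℓ ^ m - 1).choose k : ℚ_[ℓ])
        = ((ℓ ^ m).choose (k + 1) : ℚ_[ℓ]) * ((k + 1 : ℕ) : ℚ_[ℓ]) := by
      exact_mod_cast congrArg (fun n : ℕ => (n : ℚ_[ℓ])) hid
    have hC : ((ℓ ^ m).choose (k + 1) : ℚ_[ℓ])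
        = ((ℓ : ℚ_[ℓ]) ^ m) * ((ℓ ^ m - 1).choose k : ℚ_[ℓ]) / ((k + 1 : ℕ) : ℚ_[ℓ]) := by
      rw [eq_div_iff hk1]
      exact hidQ.symm
    rw [hC, norm_div, norm_mul, div_eq_mul_inv, mul_comm]
    refine mul_le_mul_of_nonneg_left ?_ (inv_nonneg.2 (norm_nonneg _))
    calc ‖(ℓ : ℚ_[ℓ]) ^ m‖ * ‖(((ℓ ^ m - 1).choose k : ℕ) : ℚ_[ℓ])‖
        ≤ ‖(ℓ : ℚ_[ℓ]) ^ m‖ * 1 := by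
          gcongr; exact_mod_cast Padic.norm_int_le_one (((ℓ ^ m - 1).choose k : ℤ))
      _ = ((ℓ : ℝ)⁻¹) ^ m := by
          rw [mul_one, norm_pow, Padic.norm_p, inv_pow]
  have hto : Tendsto (fun m : ℕ => ‖((k + 1 : ℕ) : ℚ_[ℓ])‖⁻¹ * ((ℓ : ℝ)⁻¹) ^ m) atTop (𝓝 0) := by
    have h1 : (ℓ : ℝ)⁻¹ < 1 := by
      rw [inv_lt_one_iff₀]
      right; exact_mod_cast hℓ.out.one_lt
    have h0 : (0 : ℝ) ≤ (ℓ : ℝ)⁻¹ := by positivity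
    have := tendsto_pow_atTop_nhds_zero_of_lt_one h0 h1
    simpa using this.const_mul (‖((k + 1 : ℕ) : ℚ_[ℓ])‖⁻¹)
  exact squeeze_zero_norm hbound hto

theorem aux_unipotent_tendsto {A : Type*} [NormedRing A] [NormedAlgebra ℚ_[ℓ] A]
    (q : A) (s : ℕ) (hq : q ^ (s + 1) = 0) :
    Tendsto (fun m : ℕ => (1 + q) ^ ℓ ^ m) atTop (𝓝 1) := by
  set r := s + 1 with hr
  have hqk : ∀ k, r ≤ k → q ^ k = 0 := fun k hk => pow_eq_zero_of_le hk hq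
  have key : ∀ᶠ m : ℕ in atTop, (1 + q) ^ ℓ ^ m
      = ∑ k ∈ Finset.range r, q ^ k * (((ℓ ^ m).choose k : ℕ) : A) := by
    filter_upwards [eventually_ge_atTop r] with m hm
    have hle : r ≤ ℓ ^ m + 1 := le_trans hm (le_trans (Nat.le_of_lt (Nat.lt_pow_self (n := m) hℓ.out.one_lt)) (Nat.le_succ _))
    have hbin : (1 + q) ^ (ℓ ^ m) = ∑ k ∈ Finset.range (ℓ ^ m + 1),
        q ^ k * (1 : A) ^ (ℓ ^ m - k) * (((ℓ ^ m).choose k : ℕ) : A) := by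
      rw [add_comm 1 q]
      exact_mod_cast Commute.add_pow (Commute.one_right q) (ℓ ^ m)
    rw [hbin]
    rw [← Finset.sum_subset (Finset.range_subset_range.2 hle)]
    · exact Finset.sum_congr rfl fun k _ => by rw [one_pow, mul_one]
    · intro k _ hk
      rw [Finset.mem_range, not_lt] at hk
      rw [hqk k hk, zero_mul, zero_mul]
  rw [tendsto_congr' key]
  have hsplit : ∀ m : ℕ, ∑ k ∈ Finset.range r, q ^ k * (((ℓ ^ m).choose k : ℕ) : A)
      = (∑ i ∈ Finset.range s, q ^ (i + 1) * (((ℓ ^ m).choose (i + 1) : ℕ) : A)) + 1 := by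
    intro m
    rw [hr, Finset.sum_range_succ']
    simp
  simp only [hsplit]
  have h0 : Tendsto (fun m : ℕ => ∑ i ∈ Finset.range s,
      q ^ (i + 1) * (((ℓ ^ m).choose (i + 1) : ℕ) : A)) atTop (𝓝 0) := by
    have : (0 : A) = ∑ i ∈ Finset.range s, (0 : A) := by simp
    rw [this]
    apply tendsto_finset_sum
    intro i _
    have hcast : ∀ m : ℕ, (((ℓ ^ m).choose (i + 1) : ℕ) : A)
        = algebraMap ℚ_[ℓ] A (((ℓ ^ m).choose (i + 1) : ℚ_[ℓ])) := by
      intro m; rw [map_natCast]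
    simp only [hcast]
    have := ((continuous_algebraMap ℚ_[ℓ] A).tendsto 0).comp (aux_choose_tendsto (ℓ := ℓ) i)
    rw [map_zero] at this
    simpa using (tendsto_const_nhds (x := q ^ (i + 1))).mul this
  simpa using h0.add tendsto_const_nhds

theorem aux_ker {G : Type*} [Group G] [TopologicalSpace G] [IsTopologicalGroup G]
    [CompactSpace G] [T2Space G] [TotallyDisconnectedSpace G]
    (t : G →* Multiplicative ℤ_[ℓ]) (ht : Continuous t)
    (hP : ∀ U : Subgroup t.ker, U.Normal → IsOpen (U : Set t.ker) → Nat.Coprime U.index ℓ)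
    {A : Type*} [NormedRing A] [NormedAlgebra ℚ_[ℓ] A]
    (ρ : G →* Aˣ) (hρc : Continuous ρ)
    (hρu : ∀ g : G, IsNilpotent ((ρ g : A) - 1)) :
    ∀ g : G, g ∈ t.ker → ρ g = 1 := by
  have hcont : Continuous fun g : G => ((ρ g : A)) := Units.continuous_val.comp hρc
  -- instances on the kernel
  have hKclosed : IsClosed ((t.ker : Subgroup G) : Set G) := by
    have : ((t.ker : Subgroup G) : Set G) = ⇑t ⁻¹' {1} := rfl
    rw [this]
    exact (isClosed_singleton).preimage ht
  haveI : CompactSpace (t.ker) := isCompact_iff_compactSpace.1 hKclosed.isCompact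
  intro g hg
  set u : A := ((ρ g : A)) with hu
  obtain ⟨s, hs⟩ := hρu g
  have hqnil : (u - 1) ^ (s + 1) = 0 := pow_eq_zero_of_le (Nat.le_succ s) hs
  have htend : Tendsto (fun m : ℕ => u ^ ℓ ^ m) atTop (𝓝 1) := by
    have := aux_unipotent_tendsto (ℓ := ℓ) (u - 1) s hqnil
    simpa using this
  -- frequently, the power is near u
  have hfreq : ∀ sset ∈ 𝓝 u, ∀ M : ℕ, ∃ m, M ≤ m ∧ u ^ ℓ ^ m ∈ sset := by
    intro sset hsset M
    obtain ⟨s', hsub, hs'open, hus'⟩ := mem_nhds_iff.1 hsset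
    set Ω : Set G := (fun h : G => ((ρ h : A))) ⁻¹' s' with hΩ
    have hΩopen : IsOpen Ω := hs'open.preimage hcont
    have hgΩ : g ∈ Ω := hus'
    set k : t.ker := ⟨g, hg⟩ with hk
    set W₀ : Set t.ker := (fun w : t.ker => k * w) ⁻¹' (Subtype.val ⁻¹' Ω) with hW₀
    have hW₀open : IsOpen W₀ :=
      ((hΩopen.preimage continuous_subtype_val).preimage (continuous_mul_left k))
    have h1W₀ : (1 : t.ker) ∈ W₀ := by
      show ((k * 1 : t.ker) : G) ∈ Ω
      simpa using hgΩ
    obtain ⟨W, hWclopen, h1W, hWsub⟩ := compact_exists_isClopen_in_isOpen hW₀open h1W₀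
    obtain ⟨H, hH⟩ :=
      IsTopologicalGroup.exist_openNormalSubgroup_sub_clopen_nhds_of_one hWclopen h1W
    have hcop : Nat.Coprime H.toSubgroup.index ℓ :=
      hP H.toSubgroup H.isNormal' H.toOpenSubgroup.isOpen
    have hind : H.toSubgroup.index ≠ 0 := by
      intro h0
      rw [h0] at hcop
      exact Nat.Prime.ne_one hℓ.out (Nat.coprime_zero_left ℓ |>.1 hcop)
    haveI : Finite (t.ker ⧸ H.toSubgroup) := by
      rw [Subgroup.index_eq_card] at hind
      exact Nat.finite_of_card_ne_zero hind
    set d := orderOf ((k : t.ker ⧸ H.toSubgroup)) with hd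
    have hdpos : 0 < d := orderOf_pos _
    have hddvd : d ∣ H.toSubgroup.index := by
      rw [Subgroup.index_eq_card]
      exact orderOf_dvd_natCard _
    have hcop2 : Nat.Coprime ℓ d := ((Nat.Coprime.coprime_dvd_left hddvd) hcop).symm
    have heuler : ℓ ^ d.totient ≡ 1 [MOD d] := Nat.ModEq.pow_totient hcop2
    set m := d.totient * (M + 1) with hm
    have hmM : M ≤ m := by
      calc M ≤ M + 1 := Nat.le_succ M
        _ ≤ d.totient * (M + 1) := Nat.le_mul_of_pos_left _ (Nat.totient_pos.2 hdpos)
    have hmod : ℓ ^ m ≡ 1 [MOD d] := by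
      have := heuler.pow (M + 1)
      rwa [← pow_mul, one_pow] at this
    have hq : ((k ^ ℓ ^ m : t.ker) : t.ker ⧸ H.toSubgroup) = ((k : t.ker ⧸ H.toSubgroup)) := by
      have : ((k : t.ker ⧸ H.toSubgroup)) ^ (ℓ ^ m) = ((k : t.ker ⧸ H.toSubgroup)) ^ 1 := by
        rw [pow_eq_pow_iff_modEq]
        exact hmod
      simpa using this
    have hmem : k ^ ℓ ^ m ∈ Subtype.val ⁻¹' Ω := by
      have h2 : k⁻¹ * k ^ ℓ ^ m ∈ H.toSubgroup := by
        rw [← QuotientGroup.eq]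
        exact hq.symm
      have h3 : k⁻¹ * k ^ ℓ ^ m ∈ W₀ := hW₀ ▸ hWsub (hH h2)
      have h4 : k * (k⁻¹ * k ^ ℓ ^ m) ∈ Subtype.val ⁻¹' Ω := h3
      rwa [mul_inv_cancel_left] at h4
    refine ⟨m, hmM, hsub ?_⟩
    have h5 : ((k ^ ℓ ^ m : t.ker) : G) ∈ Ω := hmem
    have h6 : (g : G) ^ ℓ ^ m ∈ Ω := by
      rwa [SubmonoidClass.coe_pow] at h5
    have h7 : ((ρ (g ^ ℓ ^ m) : A)) ∈ s' := h6
    rwa [map_pow, Units.val_pow_eq_pow_val] at h7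
  -- cluster point argument
  have hne : (𝓝 u ⊓ Filter.map (fun m : ℕ => u ^ ℓ ^ m) atTop).NeBot := by
    rw [Filter.inf_neBot_iff]
    intro sset hsset tset htset
    rw [Filter.mem_map, Filter.mem_atTop_sets] at htset
    obtain ⟨M, hM⟩ := htset
    obtain ⟨m, hmM, hmem⟩ := hfreq sset hsset M
    exact ⟨u ^ ℓ ^ m, hmem, hM m hmM⟩
  have hle : 𝓝 u ⊓ Filter.map (fun m : ℕ => u ^ ℓ ^ m) atTop ≤ 𝓝 u ⊓ 𝓝 (1 : A) :=
    inf_le_inf_left _ htend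
  have hu1 : u = (1 : A) := t2_iff_nhds.1 inferInstance (hne.mono hle)
  exact Units.ext hu1

theorem aux_dense {G : Type*} [Group G] [TopologicalSpace G] [IsTopologicalGroup G]
    [CompactSpace G] [T2Space G]
    (t : G →* Multiplicative ℤ_[ℓ]) (ht : Continuous t) (hts : Function.Surjective t) :
    Dense {g : G | ∃ n : ℕ, t g = Multiplicative.ofAdd ((n : ℤ_[ℓ]))} := by
  set e := QuotientGroup.quotientKerEquivOfSurjective t hts with he_def
  have hcomp : ∀ g : G, e (QuotientGroup.mk g) = t g := fun g => rfl
  have he : Continuous ⇑e := by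
    rw [QuotientGroup.isOpenQuotientMap_mk.isQuotientMap.continuous_iff]
    exact ht.congr fun g => (hcomp g).symm
  let eh : (G ⧸ t.ker) ≃ₜ Multiplicative ℤ_[ℓ] :=
    Continuous.homeoOfEquivCompactToT2 (f := e.toEquiv) he
  have hcomp2 : ⇑t = ⇑eh ∘ (QuotientGroup.mk : G → G ⧸ t.ker) := by
    funext g; exact (hcomp g).symm
  have hopen : IsOpenMap ⇑t := by
    rw [hcomp2]
    exact eh.isOpenMap.comp QuotientGroup.isOpenMap_coe
  have hSdense : Dense (Set.range fun n : ℕ => Multiplicative.ofAdd ((n : ℤ_[ℓ]))) :=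
    PadicInt.denseRange_natCast
  have := hSdense.preimage hopen
  have hset : ⇑t ⁻¹' (Set.range fun n : ℕ => Multiplicative.ofAdd ((n : ℤ_[ℓ])))
      = {g : G | ∃ n : ℕ, t g = Multiplicative.ofAdd ((n : ℤ_[ℓ]))} := by
    ext g; simp [eq_comm]
  rwa [hset] at this

noncomputable def auxA (q : A) (r : ℕ) (j : ℕ) : A :=
  ∑ k ∈ Finset.range r, (((descPochhammer ℚ_[ℓ] k).coeff j) / (k.factorial : ℚ_[ℓ])) • q ^ k

noncomputable def auxF (q : A) (r : ℕ) (x : ℚ_[ℓ]) : A :=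
  ∑ j ∈ Finset.range r, x ^ j • auxA ℓ q r j

theorem auxA_zero (q : A) (r : ℕ) (j : ℕ) (hj : r ≤ j) : auxA ℓ q r j = 0 := by
  apply Finset.sum_eq_zero
  intro k hk
  rw [Finset.mem_range] at hk
  rw [Polynomial.coeff_eq_zero_of_natDegree_lt, zero_div, zero_smul]
  rw [descPochhammer_natDegree]
  exact lt_of_lt_of_le hk hj

theorem auxF_cont (q : A) (r : ℕ) : Continuous (auxF ℓ q r) := by
  apply continuous_finset_sum
  intro j _
  exact (continuous_pow j).smul continuous_const

theorem auxF_eval (q : A) (r : ℕ) (x : ℚ_[ℓ]) :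
    auxF ℓ q r x = ∑ k ∈ Finset.range r,
      (((descPochhammer ℚ_[ℓ] k).eval x) / (k.factorial : ℚ_[ℓ])) • q ^ k := by
  unfold auxF auxA
  simp only [Finset.smul_sum]
  rw [Finset.sum_comm]
  refine Finset.sum_congr rfl fun k hk => ?_
  rw [Finset.mem_range] at hk
  have hdeg : (descPochhammer ℚ_[ℓ] k).natDegree < r := by
    rw [descPochhammer_natDegree]; exact hk
  rw [Polynomial.eval_eq_sum_range' hdeg, Finset.sum_div, Finset.sum_smul]
  refine Finset.sum_congr rfl fun j _ => ?_
  rw [smul_smul]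
  congr 1
  ring

theorem auxF_natCast (q : A) (r : ℕ) (hq : ∀ k, r ≤ k → q ^ k = 0) (n : ℕ) :
    auxF ℓ q r ((n : ℚ_[ℓ])) = (1 + q) ^ n := by
  have hLHS : auxF ℓ q r ((n : ℚ_[ℓ])) = ∑ k ∈ Finset.range r, ((n.choose k : ℚ_[ℓ])) • q ^ k := by
    rw [auxF_eval]
    refine Finset.sum_congr rfl fun k _ => ?_
    rw [descPochhammer_eval_eq_descFactorial, Nat.descFactorial_eq_factorial_mul_choose]
    congr 1
    have hfac : ((k.factorial : ℚ_[ℓ])) ≠ 0 := Nat.cast_ne_zero.2 (Nat.factorial_ne_zero k)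
    push_cast
    rw [mul_comm, mul_div_assoc, div_self hfac, mul_one]
  have hRHS : (1 + q) ^ n = ∑ k ∈ Finset.range (n + 1), ((n.choose k : ℚ_[ℓ])) • q ^ k := by
    rw [add_comm 1 q]
    rw [Commute.add_pow (Commute.one_right q) n]
    refine Finset.sum_congr rfl fun k _ => ?_
    rw [one_pow, mul_one, Nat.cast_smul_eq_nsmul ℚ_[ℓ] (n.choose k) (q ^ k), nsmul_eq_mul]
    exact ((Nat.cast_commute (n.choose k) (q ^ k)).eq).symm
  rw [hLHS, hRHS]
  have e1 : ∑ k ∈ Finset.range r, ((n.choose k : ℚ_[ℓ])) • q ^ k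
      = ∑ k ∈ Finset.range (r + (n+1)), ((n.choose k : ℚ_[ℓ])) • q ^ k := by
    apply Finset.sum_subset (Finset.range_subset_range.2 (Nat.le_add_right r (n+1)))
    intro k _ hk
    rw [Finset.mem_range, not_lt] at hk
    rw [hq k hk, smul_zero]
  have e2 : ∑ k ∈ Finset.range (n+1), ((n.choose k : ℚ_[ℓ])) • q ^ k
      = ∑ k ∈ Finset.range (r + (n+1)), ((n.choose k : ℚ_[ℓ])) • q ^ k := by
    apply Finset.sum_subset (Finset.range_subset_range.2 (Nat.le_add_left (n+1) r))
    intro k _ hk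
    rw [Finset.mem_range, not_lt] at hk
    have hnk : n < k := lt_of_lt_of_le (Nat.lt_succ_self n) hk
    rw [Nat.choose_eq_zero_of_lt hnk, Nat.cast_zero, zero_smul]
  rw [e1, e2]

theorem aux_exp (q : A) (r : ℕ) (hr : 0 < r) (hqr : ∀ k, r ≤ k → q ^ k = 0)
    (hhom : ∀ x y : ℤ_[ℓ],
      auxF ℓ q r ((x : ℚ_[ℓ]) + (y : ℚ_[ℓ])) = auxF ℓ q r (x : ℚ_[ℓ]) * auxF ℓ q r (y : ℚ_[ℓ])) :
    ∃ N : A, N ^ r = 0 ∧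
      ∀ x : ℚ_[ℓ], auxF ℓ q r x = ∑ k ∈ Finset.range r, ((x ^ k / (k.factorial : ℚ_[ℓ])) • N ^ k) := by
  set a : ℕ → A := auxA ℓ q r with ha
  have ha0 : ∀ j, r ≤ j → a j = 0 := fun j hj => auxA_zero ℓ q r j hj
  -- Step 1 : coefficient identities from the functional equation
  have h1 : ∀ (x : ℤ_[ℓ]) (i : ℕ), i < r →
      (∑ j ∈ Finset.range r, (((j.choose i : ℚ_[ℓ])) * (x : ℚ_[ℓ]) ^ (j - i)) • a j)
        = auxF ℓ q r (x : ℚ_[ℓ]) * a i := by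
    intro x i hi
    have key : ∀ y : ℤ_[ℓ], ∑ i ∈ Finset.range r, ((y : ℚ_[ℓ]) ^ i) •
        ((∑ j ∈ Finset.range r, (((j.choose i : ℚ_[ℓ])) * (x : ℚ_[ℓ]) ^ (j - i)) • a j)
          - auxF ℓ q r (x : ℚ_[ℓ]) * a i) = 0 := by
      intro y
      have hexp : auxF ℓ q r ((x : ℚ_[ℓ]) + (y : ℚ_[ℓ]))
          = ∑ i ∈ Finset.range r, ((y : ℚ_[ℓ]) ^ i) •
              (∑ j ∈ Finset.range r, (((j.choose i : ℚ_[ℓ])) * (x : ℚ_[ℓ]) ^ (j - i)) • a j) := by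
        rw [auxF]
        have hbin : ∀ j ∈ Finset.range r, ((x : ℚ_[ℓ]) + (y : ℚ_[ℓ])) ^ j • a j
            = ∑ i ∈ Finset.range r,
                ((y : ℚ_[ℓ]) ^ i * ((x : ℚ_[ℓ]) ^ (j - i) * ((j.choose i : ℚ_[ℓ])))) • a j := by
          intro j hj
          rw [Finset.mem_range] at hj
          rw [add_comm (x : ℚ_[ℓ]) (y : ℚ_[ℓ]), add_pow]
          rw [← Finset.sum_subset (Finset.range_subset_range.2 hj : Finset.range (j+1) ⊆ Finset.range r)]
          · rw [Finset.sum_smul]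
            refine Finset.sum_congr rfl fun i _ => ?_
            congr 1
            ring
          · intro i _ hik
            rw [Finset.mem_range, not_lt] at hik
            simp [Nat.choose_eq_zero_of_lt hik]
        rw [Finset.sum_congr rfl hbin, Finset.sum_comm]
        refine Finset.sum_congr rfl fun i _ => ?_
        rw [Finset.smul_sum]
        refine Finset.sum_congr rfl fun j _ => ?_
        rw [smul_smul]
        congr 1
        ring
      have hprod : auxF ℓ q r (x : ℚ_[ℓ]) * auxF ℓ q r (y : ℚ_[ℓ])
          = ∑ i ∈ Finset.range r, ((y : ℚ_[ℓ]) ^ i) • (auxF ℓ q r (x : ℚ_[ℓ]) * a i) := by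
        simp only [auxF]
        rw [Finset.mul_sum]
        exact Finset.sum_congr rfl fun i _ => (mul_smul_comm _ _ _)
      simp only [smul_sub]
      rw [Finset.sum_sub_distrib, ← hexp, ← hprod, hhom x y, sub_self]
    have := aux_vanish ℓ r _ key i hi
    exact sub_eq_zero.1 this
  -- the recursion
  have hF0 : auxF ℓ q r 0 = 1 := by
    have := auxF_natCast ℓ q r hqr 0
    rw [Nat.cast_zero] at this
    rw [this, pow_zero]
  have haA0 : a 0 = 1 := by
    have : auxF ℓ q r 0 = a 0 := by
      rw [auxF]
      rw [Finset.sum_eq_single 0]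
      · rw [pow_zero, one_smul]
      · intro j _ hj
        rw [zero_pow hj, zero_smul]
      · intro h; exact absurd (Finset.mem_range.2 hr) h
    rw [← this, hF0]
  have hrec : ∀ i : ℕ, (((i : ℚ_[ℓ])) + 1) • a (i + 1) = a i * a 1 := by
    by_cases hr1 : 1 < r
    · -- main case
      have h2 : ∀ x : ℤ_[ℓ], ∑ i ∈ Finset.range r, ((x : ℚ_[ℓ]) ^ i) •
          ((((i : ℚ_[ℓ]) + 1) • a (i + 1)) - a i * a 1) = 0 := by
        intro x
        have hL : ∑ j ∈ Finset.range r, (((j.choose 1 : ℚ_[ℓ])) * (x : ℚ_[ℓ]) ^ (j - 1)) • a j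
            = ∑ i ∈ Finset.range r, ((x : ℚ_[ℓ]) ^ i) • ((((i : ℚ_[ℓ]) + 1) • a (i + 1))) := by
          set f : ℕ → A := fun j => (((j.choose 1 : ℚ_[ℓ])) * (x : ℚ_[ℓ]) ^ (j - 1)) • a j with hf
          have hfr : f r = 0 := by
            rw [hf]; simp only; rw [ha0 r le_rfl, smul_zero]
          have : ∑ j ∈ Finset.range r, f j = ∑ j ∈ Finset.range (r + 1), f j := by
            rw [Finset.sum_range_succ, hfr, add_zero]
          rw [this, Finset.sum_range_succ']
          have hf0 : f 0 = 0 := by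
            rw [hf]; simp only; rw [Nat.choose_eq_zero_of_lt Nat.one_pos, Nat.cast_zero, zero_mul,
              zero_smul]
          rw [hf0, add_zero]
          refine Finset.sum_congr rfl fun i _ => ?_
          rw [hf]
          simp only
          rw [Nat.choose_one_right, Nat.succ_sub_one, smul_smul]
          congr 1
          · push_cast; ring
        have hR : auxF ℓ q r (x : ℚ_[ℓ]) * a 1
            = ∑ i ∈ Finset.range r, ((x : ℚ_[ℓ]) ^ i) • (a i * a 1) := by
          rw [auxF, Finset.sum_mul]
          exact Finset.sum_congr rfl fun i _ => (smul_mul_assoc _ _ _)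
        simp only [smul_sub]
        rw [Finset.sum_sub_distrib, ← hL, ← hR, h1 x 1 hr1, sub_self]
      intro i
      by_cases hir : i < r
      · exact sub_eq_zero.1 (aux_vanish ℓ r _ h2 i hir)
      · rw [not_lt] at hir
        rw [ha0 i hir, ha0 (i + 1) (le_trans hir (Nat.le_succ i)), smul_zero, zero_mul]
    · -- r = 1
      have hre : r = 1 := le_antisymm (not_lt.1 hr1) hr
      intro i
      rw [ha0 (i + 1) (by omega), ha0 1 (by omega), smul_zero, mul_zero]
  -- solve the recursion
  set N : A := a 1 with hN
  have hak : ∀ k : ℕ, a k = ((k.factorial : ℚ_[ℓ]))⁻¹ • N ^ k := by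
    intro k
    induction k with
    | zero => rw [haA0, Nat.factorial_zero, Nat.cast_one, inv_one, pow_zero, one_smul]
    | succ k ih =>
      have hne : ((k : ℚ_[ℓ]) + 1) ≠ 0 := Nat.cast_add_one_ne_zero k
      have : a (k + 1) = ((k : ℚ_[ℓ]) + 1)⁻¹ • (a k * N) := by
        rw [← hrec k, smul_smul, inv_mul_cancel₀ hne, one_smul]
      rw [this, ih, smul_mul_assoc, ← pow_succ, smul_smul]
      congr 1
      rw [Nat.factorial_succ, Nat.cast_mul, mul_inv]
      congr 1
      push_cast
      ring
  have hNr : N ^ r = 0 := by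
    have h0 : a r = 0 := ha0 r le_rfl
    rw [hak r] at h0
    have hne : ((r.factorial : ℚ_[ℓ]))⁻¹ ≠ 0 :=
      inv_ne_zero (Nat.cast_ne_zero.2 (Nat.factorial_ne_zero r))
    rcases smul_eq_zero.1 h0 with h | h
    · exact absurd h hne
    · exact h
  refine ⟨N, hNr, fun x => ?_⟩
  rw [auxF]
  refine Finset.sum_congr rfl fun k _ => ?_
  rw [← ha, hak k, smul_smul, div_eq_mul_inv]

end Aux


/-- `exp (x • N) = Σ_k x^k N^k / k!` for an endomorphism `N` of a `ℚ_ℓ`-vector space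
and a scalar `x`. For nilpotent `N` this is a finite sum. -/
noncomputable def expSMul (ℓ : ℕ) [Fact ℓ.Prime] {V : Type*} [NormedAddCommGroup V]
    [NormedSpace ℚ_[ℓ] V] (x : ℚ_[ℓ]) (N : V →L[ℚ_[ℓ]] V) : V →L[ℚ_[ℓ]] V :=
  ∑' k : ℕ, ((x ^ k / (k.factorial : ℚ_[ℓ])) • N ^ k)

theorem expSMul_eq_sum (ℓ : ℕ) [Fact ℓ.Prime] {V : Type*} [NormedAddCommGroup V]
    [NormedSpace ℚ_[ℓ] V] (x : ℚ_[ℓ]) (N : V →L[ℚ_[ℓ]] V) (r : ℕ) (hN : N ^ r = 0) :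
    expSMul ℓ x N = ∑ k ∈ Finset.range r, ((x ^ k / (k.factorial : ℚ_[ℓ])) • N ^ k) := by
  apply tsum_eq_sum
  intro k hk
  rw [Finset.mem_range, not_lt] at hk
  rw [pow_eq_zero_of_le hk hN, smul_zero]

/-- Let `ℓ` be a prime and `G` a profinite group with a continuous
surjective homomorphism `t : G → ℤ_ℓ` whose kernel is pro-(prime-to-`ℓ`). Let `V` be
a finite-dimensional `ℚ_ℓ`-vector space and `ρ : G → GL(V)` a continuous homomorphism
with every `ρ g` unipotent. Then there is a unique nilpotent endomorphism `N` of `V`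
with `ρ g = exp (t g • N)` for all `g`. -/
theorem stmt_7
    (ℓ : ℕ) [Fact ℓ.Prime]
    (G : Type*) [Group G] [TopologicalSpace G] [IsTopologicalGroup G]
    [CompactSpace G] [T2Space G] [TotallyDisconnectedSpace G]
    (t : G →* Multiplicative ℤ_[ℓ])
    (ht : Continuous t) (hts : Function.Surjective t)
    (hP : ∀ U : Subgroup t.ker, U.Normal → IsOpen (U : Set t.ker) → Nat.Coprime U.index ℓ)
    (V : Type*) [NormedAddCommGroup V] [NormedSpace ℚ_[ℓ] V] [FiniteDimensional ℚ_[ℓ] V]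
    (ρ : G →* (V →L[ℚ_[ℓ]] V)ˣ) (hρc : Continuous ρ)
    (hρu : ∀ g : G, IsNilpotent ((ρ g : V →L[ℚ_[ℓ]] V) - 1)) :
    ∃! N : V →L[ℚ_[ℓ]] V, IsNilpotent N ∧
      ∀ g : G, (ρ g : V →L[ℚ_[ℓ]] V)
        = expSMul ℓ ((Multiplicative.toAdd (t g) : ℤ_[ℓ]) : ℚ_[ℓ]) N := by
  set A := V →L[ℚ_[ℓ]] V with hA
  have hker : ∀ g : G, g ∈ t.ker → ρ g = 1 := aux_ker ℓ t ht hP ρ hρc hρu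
  have hconst : ∀ g h : G, t g = t h → ρ g = ρ h := by
    intro g h hth
    have hmem : g * h⁻¹ ∈ t.ker := by
      rw [MonoidHom.mem_ker, map_mul, map_inv, hth, mul_inv_cancel]
    have := hker _ hmem
    rw [map_mul, map_inv] at this
    exact mul_inv_eq_one.1 this
  obtain ⟨g₁, hg₁⟩ := hts (Multiplicative.ofAdd (1 : ℤ_[ℓ]))
  set u : A := ((ρ g₁ : A)) with hu
  obtain ⟨s, hs⟩ := hρu g₁
  set r := s + 1 with hrdef
  have hqr : ∀ k, r ≤ k → (u - 1) ^ k = 0 := fun k hk =>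
    pow_eq_zero_of_le hk (pow_eq_zero_of_le (Nat.le_succ s) hs ▸
      (pow_eq_zero_of_le (le_refl r) (pow_eq_zero_of_le (Nat.le_succ s) hs)))
  have hone : (1 : A) + (u - 1) = u := by rw [add_comm, sub_add_cancel]
  have htpow : ∀ n : ℕ, t (g₁ ^ n) = Multiplicative.ofAdd ((n : ℤ_[ℓ])) := by
    intro n
    rw [map_pow, hg₁, ← ofAdd_nsmul]
    congr 1
    rw [nsmul_eq_mul, mul_one]
  have hρnat : ∀ n : ℕ, ((ρ (g₁ ^ n) : A)) = u ^ n := by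
    intro n
    rw [map_pow, Units.val_pow_eq_pow_val]
  -- the key interpolation identity
  have hFg : ∀ g : G, ((ρ g : A))
      = auxF ℓ (u - 1) r (((Multiplicative.toAdd (t g) : ℤ_[ℓ]) : ℚ_[ℓ])) := by
    have hdense := aux_dense ℓ t ht hts
    have hcont1 : Continuous fun g : G => ((ρ g : A)) := Units.continuous_val.comp hρc
    have hcont2 : Continuous fun g : G =>
        auxF ℓ (u - 1) r (((Multiplicative.toAdd (t g) : ℤ_[ℓ]) : ℚ_[ℓ])) := by
      apply (auxF_cont ℓ (u - 1) r).comp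
      have hiso : Isometry ((↑) : ℤ_[ℓ] → ℚ_[ℓ]) := Isometry.of_dist_eq fun a b => rfl
      exact hiso.continuous.comp ht
    refine congrFun (Continuous.ext_on hdense hcont1 hcont2 ?_)
    rintro g ⟨n, hn⟩
    have h1 : ρ g = ρ (g₁ ^ n) := hconst _ _ (by rw [hn, htpow n])
    have h2 : ((Multiplicative.toAdd (t g) : ℤ_[ℓ]) : ℚ_[ℓ]) = ((n : ℚ_[ℓ])) := by
      rw [hn]
      simp [PadicInt.coe_natCast]
    show ((ρ g : A)) = auxF ℓ (u - 1) r _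
    rw [h1, hρnat n, h2, auxF_natCast ℓ (u - 1) r hqr n, hone]
  have hhom : ∀ x y : ℤ_[ℓ],
      auxF ℓ (u - 1) r ((x : ℚ_[ℓ]) + (y : ℚ_[ℓ]))
        = auxF ℓ (u - 1) r (x : ℚ_[ℓ]) * auxF ℓ (u - 1) r (y : ℚ_[ℓ]) := by
    intro x y
    obtain ⟨gx, hgx⟩ := hts (Multiplicative.ofAdd x)
    obtain ⟨gy, hgy⟩ := hts (Multiplicative.ofAdd y)
    have h1 := hFg (gx * gy)
    have h2 := hFg gx
    have h3 := hFg gy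
    have ht2 : t (gx * gy) = Multiplicative.ofAdd (x + y) := by
      rw [map_mul, hgx, hgy, ofAdd_add]
    rw [ht2, toAdd_ofAdd, PadicInt.coe_add] at h1
    rw [hgx, toAdd_ofAdd] at h2
    rw [hgy, toAdd_ofAdd] at h3
    rw [← h1, ← h2, ← h3, map_mul, Units.val_mul]
  obtain ⟨N, hNr, hFx⟩ := aux_exp ℓ (u - 1) r (Nat.succ_pos s) hqr hhom
  refine ⟨N, ⟨⟨r, hNr⟩, fun g => ?_⟩, ?_⟩
  · rw [expSMul_eq_sum ℓ _ N r hNr, hFg g]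
    exact hFx _
  · -- uniqueness
    rintro N' ⟨⟨s', hs'⟩, hN'⟩
    set m := r + s' + 2 with hm
    have hNm : N ^ m = 0 := pow_eq_zero_of_le (by omega) hNr
    have hN'm : N' ^ m = 0 := pow_eq_zero_of_le (by omega) hs'
    have hvan : ∀ x : ℤ_[ℓ], ∑ k ∈ Finset.range m,
        ((x : ℚ_[ℓ]) ^ k) • ((1 / (k.factorial : ℚ_[ℓ])) • (N' ^ k - N ^ k)) = 0 := by
      intro x
      obtain ⟨g, hg⟩ := hts (Multiplicative.ofAdd x)
      have e1 : ((ρ g : A)) = expSMul ℓ (x : ℚ_[ℓ]) N' := by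
        have := hN' g
        rwa [hg, toAdd_ofAdd] at this
      have e2 : ((ρ g : A)) = expSMul ℓ (x : ℚ_[ℓ]) N := by
        rw [hFg g, hg, toAdd_ofAdd, expSMul_eq_sum ℓ _ N r hNr]
        exact hFx _
      have e3 : expSMul ℓ (x : ℚ_[ℓ]) N' = expSMul ℓ (x : ℚ_[ℓ]) N := by
        rw [← e1, e2]
      rw [expSMul_eq_sum ℓ _ N' m hN'm, expSMul_eq_sum ℓ _ N m hNm] at e3
      have : ∑ k ∈ Finset.range m, (((x : ℚ_[ℓ]) ^ k / (k.factorial : ℚ_[ℓ])) • (N' ^ k - N ^ k))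
          = 0 := by
        simp only [smul_sub]
        rw [Finset.sum_sub_distrib, e3, sub_self]
      rw [← this]
      refine Finset.sum_congr rfl fun k _ => ?_
      rw [smul_smul]
      congr 1
      ring
    have hb1 := aux_vanish ℓ m _ hvan 1 (by omega)
    have : N' ^ 1 - N ^ 1 = 0 := by
      have h11 : (1 / ((Nat.factorial 1 : ℕ) : ℚ_[ℓ])) = 1 := by norm_num
      rw [h11, one_smul] at hb1
      exact hb1
    rw [pow_one, pow_one] at this
    exact sub_eq_zero.1 this
end

section
/- Let ℓ be a prime number, G a profinite group with a continuous surjective group homomorphism t : G → ℤ_ℓ whose kernel is a pro-(prime-to-ℓ) profinite group, V a finite-dimensional ℚ_ℓ-vector space, and ρ : G → GL(V) a continuous homomorphism with ρ(g) unipotent for all g ∈ G; let N be the unique nilpotent endomorphism of V with ρ(g) = exp(t(g)·N) for all g ∈ G. Suppose θ : G → G is a continuous group automorphism, c ∈ ℤ_ℓ^× is a unit, and A ∈ GL(V), such that t(θ(g)) = c · t(g) and ρ(θ(g)) = A ∘ ρ(g) ∘ A^{-1} for all g ∈ G. Then A ∘ N ∘ A^{-1} = c · N. -/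
/-- With `G`, `t`, `ρ`, `N` as in the quasi-unipotent setting
(`t : G → ℤ_ℓ` continuous surjective with pro-(prime-to-`ℓ`) kernel,
`ρ : G → GL(V)` continuous with unipotent values, and `N` the nilpotent endomorphism
with `ρ g = exp (t g • N)`): if `θ : G → G` is a continuous group automorphism,
`c ∈ ℤ_ℓ^×` a unit and `A ∈ GL(V)` with `t (θ g) = c * t g` and
`ρ (θ g) = A ρ(g) A⁻¹` for all `g`, then `A N A⁻¹ = c • N`. -/
theorem stmt_9
    (ℓ : ℕ) [Fact ℓ.Prime]
    (G : Type*) [Group G] [TopologicalSpace G] [IsTopologicalGroup G]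
    [CompactSpace G] [T2Space G] [TotallyDisconnectedSpace G]
    (t : G →* Multiplicative ℤ_[ℓ])
    (ht : Continuous t) (hts : Function.Surjective t)
    (hP : ∀ U : Subgroup t.ker, U.Normal → IsOpen (U : Set t.ker) → Nat.Coprime U.index ℓ)
    (V : Type*) [NormedAddCommGroup V] [NormedSpace ℚ_[ℓ] V] [FiniteDimensional ℚ_[ℓ] V]
    (ρ : G →* (V →L[ℚ_[ℓ]] V)ˣ) (hρc : Continuous ρ)
    (hρu : ∀ g : G, IsNilpotent ((ρ g : V →L[ℚ_[ℓ]] V) - 1))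
    (N : V →L[ℚ_[ℓ]] V) (hN : IsNilpotent N)
    (hρN : ∀ g : G, (ρ g : V →L[ℚ_[ℓ]] V)
        = expSMul ℓ ((Multiplicative.toAdd (t g) : ℤ_[ℓ]) : ℚ_[ℓ]) N)
    (θ : G ≃* G) (hθ : Continuous θ)
    (c : ℤ_[ℓ]ˣ) (A : (V →L[ℚ_[ℓ]] V)ˣ)
    (h₁ : ∀ g : G, Multiplicative.toAdd (t (θ g))
        = (c : ℤ_[ℓ]) * Multiplicative.toAdd (t g))
    (h₂ : ∀ g : G, (ρ (θ g) : V →L[ℚ_[ℓ]] V)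
        = (A : V →L[ℚ_[ℓ]] V) * (ρ g : V →L[ℚ_[ℓ]] V) * ((A⁻¹ : (V →L[ℚ_[ℓ]] V)ˣ) : V →L[ℚ_[ℓ]] V)) :
    (A : V →L[ℚ_[ℓ]] V) * N * ((A⁻¹ : (V →L[ℚ_[ℓ]] V)ˣ) : V →L[ℚ_[ℓ]] V)
      = (((c : ℤ_[ℓ]) : ℚ_[ℓ])) • N := by

  classical
  obtain ⟨k₀, hk₀⟩ := hN
  set M : V →L[ℚ_[ℓ]] V := (A : V →L[ℚ_[ℓ]] V) * N * ((A⁻¹ : (V →L[ℚ_[ℓ]] V)ˣ) : V →L[ℚ_[ℓ]] V)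
    with hMdef
  set n : ℕ := k₀ + 2 with hn
  have hNn : N ^ n = 0 := by rw [hn, pow_add, hk₀, zero_mul]
  have hconjpow : ∀ k : ℕ, M ^ k
      = (A : V →L[ℚ_[ℓ]] V) * N ^ k * ((A⁻¹ : (V →L[ℚ_[ℓ]] V)ˣ) : V →L[ℚ_[ℓ]] V) := by
    intro k
    induction k with
    | zero => simp
    | succ k ih =>
      rw [pow_succ, pow_succ, ih, hMdef]
      simp [mul_assoc, Units.inv_mul_cancel_left]
  have hMn : M ^ n = 0 := by rw [hconjpow, hNn]; simp
  have hexp : ∀ (x : ℚ_[ℓ]) (B : V →L[ℚ_[ℓ]] V), B ^ n = 0 →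
      expSMul ℓ x B = ∑ k ∈ Finset.range n, (x ^ k / (k.factorial : ℚ_[ℓ])) • B ^ k := by
    intro x B hB
    apply tsum_eq_sum
    intro k hk
    have hnk : n ≤ k := le_of_not_gt (fun h => hk (Finset.mem_range.mpr h))
    have hBk : B ^ k = 0 := by
      calc B ^ k = B ^ n * B ^ (k - n) := by rw [← pow_add, Nat.add_sub_cancel' hnk]
      _ = 0 := by rw [hB, zero_mul]
    rw [hBk, smul_zero]
  have hconjsum : ∀ x : ℚ_[ℓ],
      (A : V →L[ℚ_[ℓ]] V) * (∑ k ∈ Finset.range n, (x ^ k / (k.factorial : ℚ_[ℓ])) • N ^ k)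
        * ((A⁻¹ : (V →L[ℚ_[ℓ]] V)ˣ) : V →L[ℚ_[ℓ]] V)
      = ∑ k ∈ Finset.range n, (x ^ k / (k.factorial : ℚ_[ℓ])) • M ^ k := by
    intro x
    rw [Finset.mul_sum, Finset.sum_mul]
    refine Finset.sum_congr rfl fun k _ => ?_
    rw [mul_smul_comm, smul_mul_assoc, hconjpow]
  have key : ∀ x : ℤ_[ℓ],
      (∑ k ∈ Finset.range n,
        ((((c : ℤ_[ℓ]) * x : ℤ_[ℓ]) : ℚ_[ℓ]) ^ k / (k.factorial : ℚ_[ℓ])) • N ^ k)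
      = ∑ k ∈ Finset.range n, (((x : ℚ_[ℓ])) ^ k / (k.factorial : ℚ_[ℓ])) • M ^ k := by
    intro x
    obtain ⟨g, hg⟩ := hts (Multiplicative.ofAdd x)
    have htg : Multiplicative.toAdd (t g) = x := by rw [hg]; rfl
    have h1 := hρN (θ g)
    have h2 := h₂ g
    rw [hρN g] at h2
    rw [h₁ g, htg] at h1
    rw [htg] at h2
    rw [hexp _ N hNn] at h1 h2
    rw [hconjsum] at h2
    rw [← h1, h2]
  set a : ℕ → (V →L[ℚ_[ℓ]] V) := fun k =>
    ((((c : ℤ_[ℓ]) : ℚ_[ℓ])) ^ k / (k.factorial : ℚ_[ℓ])) • N ^ k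
      - ((1 : ℚ_[ℓ]) / (k.factorial : ℚ_[ℓ])) • M ^ k with ha
  have keyn : ∀ m : ℕ, ∑ k ∈ Finset.range n, ((m : ℚ_[ℓ]) ^ k) • a k = 0 := by
    intro m
    have hk := key (m : ℤ_[ℓ])
    have : ∑ k ∈ Finset.range n, ((m : ℚ_[ℓ]) ^ k) • a k
        = (∑ k ∈ Finset.range n,
            ((((c : ℤ_[ℓ]) * (m : ℤ_[ℓ]) : ℤ_[ℓ]) : ℚ_[ℓ]) ^ k / (k.factorial : ℚ_[ℓ])) • N ^ k)
          - ∑ k ∈ Finset.range n, (((m : ℚ_[ℓ])) ^ k / (k.factorial : ℚ_[ℓ])) • M ^ k := by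
      rw [← Finset.sum_sub_distrib]
      refine Finset.sum_congr rfl fun k _ => ?_
      rw [ha]
      rw [smul_sub, smul_smul, smul_smul]
      congr 1
      · congr 1
        push_cast
        ring
      · congr 1
        ring
    rw [this, hk]
    simp [PadicInt.coe_natCast]
  have haz : ∀ k, k ∈ Finset.range n → a k = 0 := by
    intro k hkmem
    rw [← Module.forall_dual_apply_eq_zero_iff ℚ_[ℓ]]
    intro φ
    set p : Polynomial ℚ_[ℓ] :=
      ∑ j ∈ Finset.range n, Polynomial.C (φ (a j)) * Polynomial.X ^ j with hp
    have hpz : p = 0 := by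
      apply Polynomial.eq_zero_of_infinite_isRoot
      apply Set.Infinite.mono (s := Set.range (fun m : ℕ => (m : ℚ_[ℓ])))
      · rintro _ ⟨m, rfl⟩
        show p.IsRoot (m : ℚ_[ℓ])
        have hφ : φ (∑ k ∈ Finset.range n, ((m : ℚ_[ℓ]) ^ k) • a k) = 0 := by
          rw [keyn m, map_zero]
        rw [map_sum] at hφ
        simp only [map_smul, smul_eq_mul] at hφ
        unfold p
        simp only [Polynomial.IsRoot, Polynomial.eval_finset_sum, Polynomial.eval_mul,
          Polynomial.eval_C, Polynomial.eval_pow, Polynomial.eval_X]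
        rw [← hφ]
        exact Finset.sum_congr rfl fun j _ => mul_comm _ _
      · exact Set.infinite_range_of_injective (fun a b h => Nat.cast_injective h)
    have hco : p.coeff k = φ (a k) := by
      unfold p
      rw [Polynomial.finset_sum_coeff]
      rw [Finset.sum_eq_single k]
      · simp
      · intro b _ hbk
        simp [Polynomial.coeff_C_mul, Polynomial.coeff_X_pow, Ne.symm hbk]
      · intro h; exact absurd hkmem h
    rw [hpz] at hco
    simpa using hco.symm
  have h1mem : (1 : ℕ) ∈ Finset.range n := by
    rw [hn]; exact Finset.mem_range.mpr (by omega)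
  have := haz 1 h1mem
  rw [ha] at this
  simp only [pow_one, Nat.factorial_one, Nat.cast_one, div_one, one_smul] at this
  exact (sub_eq_zero.mp this).symm
end

section
/- Let (A_n)_{n∈ℕ} be a sequence of finite abelian groups together with group homomorphisms f_n : A_{n+1} → A_n for each n. Then the group homomorphism Φ : Π_{n∈ℕ} A_n → Π_{n∈ℕ} A_n defined by Φ((a_n)_n) = (a_n − f_n(a_{n+1}))_n is surjective. (Equivalently, the derived inverse limit R^1 lim of any tower of finite abelian groups vanishes.) -/
/-- Auxiliary downward recursion: given a prescribed value `x` at position `n`,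
build a full family which solves `a k - f k (a (k+1)) = b k` for all `k < n`. -/
def dAux (A : ℕ → Type*) [∀ n, AddCommGroup (A n)]
    (f : ∀ n : ℕ, A (n + 1) →+ A n) (b : ∀ n, A n) :
    (n : ℕ) → A n → (k : ℕ) → A k
  | 0, x, k => if h : k = 0 then h ▸ x else 0
  | (n+1), x, k => if h : k = n + 1 then h ▸ x else dAux A f b n (b n + f n x) k

theorem dAux_self (A : ℕ → Type*) [∀ n, AddCommGroup (A n)]
    (f : ∀ n : ℕ, A (n + 1) →+ A n) (b : ∀ n, A n) (n : ℕ) (x : A n) :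
    dAux A f b n x n = x := by
  cases n <;> simp [dAux]

theorem dAux_spec (A : ℕ → Type*) [∀ n, AddCommGroup (A n)]
    (f : ∀ n : ℕ, A (n + 1) →+ A n) (b : ∀ n, A n) :
    ∀ (n : ℕ) (x : A n) (k : ℕ), k < n →
      dAux A f b n x k - f k (dAux A f b n x (k + 1)) = b k := by
  intro n
  induction n with
  | zero => intro x k hk; omega
  | succ n ih =>
    intro x k hk
    rcases Nat.lt_succ_iff_lt_or_eq.mp hk with h | rfl
    · have h1 : k ≠ n + 1 := by omega
      have h2 : k + 1 ≠ n + 1 := by omega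
      rw [show dAux A f b (n+1) x k = dAux A f b n (b n + f n x) k by
          simp [dAux, h1],
        show dAux A f b (n+1) x (k+1) = dAux A f b n (b n + f n x) (k+1) by
          simp [dAux, h2, show k ≠ n by omega]]
      exact ih _ k h
    · have h1 : (k : ℕ) ≠ k + 1 := by omega
      rw [show dAux A f b (k+1) x k = dAux A f b k (b k + f k x) k by
          simp [dAux, h1],
        show dAux A f b (k+1) x (k+1) = x by simp [dAux],
        dAux_self]
      abel

/-- For a tower `(A_n, f_n : A_{n+1} → A_n)` of finite abelian
groups, the map `Φ : Π_n A_n → Π_n A_n`, `Φ(a)_n = a_n - f_n (a_{n+1})`, is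
surjective; equivalently, `R^1 lim` of any tower of finite abelian groups vanishes. -/
theorem stmt_12
    (A : ℕ → Type*) [∀ n, AddCommGroup (A n)] [∀ n, Finite (A n)]
    (f : ∀ n : ℕ, A (n + 1) →+ A n) :
    Function.Surjective
      (fun a : (∀ n, A n) => fun n => a n - f n (a (n + 1))) := by
  intro b
  letI : ∀ n, TopologicalSpace (A n) := fun _ => ⊥
  haveI : ∀ n, DiscreteTopology (A n) := fun _ => ⟨rfl⟩
  -- the nested closed sets of partial solutions
  set V : ℕ → Set (∀ n, A n) :=
    fun N => {a | ∀ k < N, a k - f k (a (k + 1)) = b k} with hV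
  have hmono : ∀ N, V (N + 1) ⊆ V N := by
    intro N a ha k hk
    exact ha k (by omega)
  have hne : ∀ N, (V N).Nonempty := by
    intro N
    exact ⟨dAux A f b N 0, fun k hk => dAux_spec A f b N 0 k hk⟩
  have hclosed : ∀ N, IsClosed (V N) := by
    intro N
    have : V N = ⋂ k ∈ Set.Iio N,
        (fun a : ∀ n, A n => a k - f k (a (k + 1))) ⁻¹' {b k} := by
      ext a
      simp [hV, Set.mem_iInter]
    rw [this]
    refine isClosed_biInter fun k _ => IsClosed.preimage ?_ (isClosed_discrete _)
    have : (fun a : ∀ n, A n => a k - f k (a (k + 1))) =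
        (fun p : A k × A (k + 1) => p.1 - f k p.2) ∘ (fun a => (a k, a (k + 1))) :=
      rfl
    rw [this]
    exact (continuous_of_discreteTopology).comp
      (Continuous.prodMk (continuous_apply k) (continuous_apply (k + 1)))
  have hcompact : ∀ N, IsCompact (V N) := fun N => (hclosed N).isCompact
  obtain ⟨a, ha⟩ := IsCompact.nonempty_iInter_of_sequence_nonempty_isCompact_isClosed
    V hmono hne (hcompact 0) hclosed
  refine ⟨a, ?_⟩
  funext k
  have := Set.mem_iInter.mp ha (k + 1)
  exact this k (by omega)
end
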